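/- Let V be a finite-dimensional complex vector space, let N be a nilpotent linear endomorphism of V, and let T be a bijective linear endomorphism of V. Then T ∈ Col(N) if and only if for every x ∈ V there exists a linear endomorphism C of V commuting with N such that T((N)_x) = C((N)_x), i.e., the image of the cyclic subspace (N)_x under T equals its image under C. -/

import Mathlib

open Submodule

/-- A subspace `M` is invariant under the endomorphism `A`. -/
def InvSub {V : Type*} [AddCommGroup V] [Module ℂ V] (A : V →ₗ[ℂ] V)
    (M : Submodule ℂ V) : Prop :=
  M.map A ≤ M

/-- `T ∈ Col(A)`: `T` is bijective and a subspace is `A`-invariant iff its image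
under `T` is `A`-invariant. -/
def Col {V : Type*} [AddCommGroup V] [Module ℂ V] (A T : V →ₗ[ℂ] V) : Prop :=
  Function.Bijective T ∧ ∀ M : Submodule ℂ V, InvSub A M ↔ InvSub A (M.map T)

/-- The cyclic subspace `(A)_x`, i.e. the span of `{A^n x : n ≥ 0}`. -/
def cyc {V : Type*} [AddCommGroup V] [Module ℂ V] (A : V →ₗ[ℂ] V) (x : V) :
    Submodule ℂ V :=
  Submodule.span ℂ (Set.range fun n : ℕ => (A ^ n) x)

namespace S15

open LinearMap Module

variable {V : Type*} [AddCommGroup V] [Module ℂ V]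

lemma pow_succ_apply (N : V →ₗ[ℂ] V) (n : ℕ) (v : V) :
    (N ^ (n + 1)) v = N ((N ^ n) v) := by
  rw [pow_succ', Module.End.mul_apply]

lemma pow_add_apply (N : V →ₗ[ℂ] V) (a b : ℕ) (v : V) :
    (N ^ (a + b)) v = (N ^ a) ((N ^ b) v) := by
  rw [pow_add, Module.End.mul_apply]

lemma range_pow_mono (N : V →ₗ[ℂ] V) {i j : ℕ} (h : i ≤ j) :
    LinearMap.range (N ^ j) ≤ LinearMap.range (N ^ i) := by
  obtain ⟨d, rfl⟩ := Nat.exists_eq_add_of_le h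
  rintro _ ⟨v, rfl⟩
  exact ⟨(N ^ d) v, (pow_add_apply N i d v).symm⟩

lemma mem_cyc_pow (N : V →ₗ[ℂ] V) (x : V) (n : ℕ) : (N ^ n) x ∈ cyc N x :=
  subset_span ⟨n, rfl⟩

lemma mem_cyc_self (N : V →ₗ[ℂ] V) (x : V) : x ∈ cyc N x := by
  have := mem_cyc_pow N x 0
  simpa using this

lemma inv_cyc (N : V →ₗ[ℂ] V) (x : V) : InvSub N (cyc N x) := by
  rw [InvSub, cyc, Submodule.map_span]
  refine span_le.2 ?_
  rintro _ ⟨_, ⟨n, rfl⟩, rfl⟩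
  exact subset_span ⟨n + 1, show (N ^ (n+1)) x = N ((N ^ n) x) from pow_succ_apply N n x⟩

lemma cyc_le (N : V →ₗ[ℂ] V) {x : V} {M : Submodule ℂ V} (hM : InvSub N M) (hx : x ∈ M) :
    cyc N x ≤ M := by
  refine span_le.2 ?_
  rintro _ ⟨n, rfl⟩
  induction n with
  | zero => simpa using hx
  | succ n ih =>
    show (N ^ (n + 1)) x ∈ M
    rw [pow_succ_apply]
    exact hM (Submodule.mem_map_of_mem ih)

lemma comm_pow_apply {N C : V →ₗ[ℂ] V} (h : C ∘ₗ N = N ∘ₗ C) (n : ℕ) (v : V) :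
    C ((N ^ n) v) = (N ^ n) (C v) := by
  induction n generalizing v with
  | zero => simp
  | succ n ih =>
    rw [pow_succ_apply, pow_succ_apply]
    have h' := LinearMap.ext_iff.mp h ((N ^ n) v)
    simp only [LinearMap.comp_apply] at h'
    rw [h', ih v]

lemma map_cyc_comm {N C : V →ₗ[ℂ] V} (h : C ∘ₗ N = N ∘ₗ C) (x : V) :
    (cyc N x).map C = cyc N (C x) := by
  rw [cyc, Submodule.map_span, ← Set.range_comp]
  have : (C ∘ fun n : ℕ => (N ^ n) x) = fun n : ℕ => (N ^ n) (C x) :=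
    funext fun n => comm_pow_apply h n x
  rw [this, cyc]

end S15

namespace S15

open LinearMap Module

open scoped Classical

variable {V : Type*} [AddCommGroup V] [Module ℂ V]

/-- the "exponent" of a vector: least `k` with `N^k v = 0`. -/
noncomputable def htz (N : V →ₗ[ℂ] V) (hN : IsNilpotent N) (v : V) : ℕ :=
  Nat.find (p := fun k => (N ^ k) v = 0)
    (by obtain ⟨m, hm⟩ := hN; exact ⟨m, show (N ^ m) v = 0 by rw [hm]; simp⟩)

lemma htz_spec (N : V →ₗ[ℂ] V) (hN : IsNilpotent N) (v : V) :
    (N ^ htz N hN v) v = 0 := by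
  unfold htz
  exact Nat.find_spec (p := fun k => (N ^ k) v = 0) _

lemma htz_le (N : V →ₗ[ℂ] V) (hN : IsNilpotent N) (v : V) {k : ℕ}
    (h : (N ^ k) v = 0) : htz N hN v ≤ k := by
  unfold htz
  exact Nat.find_le h

lemma htz_min (N : V →ₗ[ℂ] V) (hN : IsNilpotent N) (v : V) {k : ℕ}
    (h : k < htz N hN v) : (N ^ k) v ≠ 0 := by
  unfold htz at h
  exact Nat.find_min _ h

lemma htz_pow_zero (N : V →ₗ[ℂ] V) (hN : IsNilpotent N) (v : V) {k : ℕ}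
    (h : htz N hN v ≤ k) : (N ^ k) v = 0 := by
  obtain ⟨d, rfl⟩ := Nat.exists_eq_add_of_le h
  have h1 : (N ^ (htz N hN v + d)) v = (N ^ d) ((N ^ htz N hN v) v) := by
    rw [add_comm, pow_add_apply]
  rw [h1, htz_spec, map_zero]

lemma htz_pos (N : V →ₗ[ℂ] V) (hN : IsNilpotent N) {v : V} (hv : v ≠ 0) :
    1 ≤ htz N hN v := by
  by_contra h
  push_neg at h
  have h0 : htz N hN v ≤ 0 := by omega
  have := htz_pow_zero N hN v h0
  simp at this
  exact hv this

lemma htz_pow_apply (N : V →ₗ[ℂ] V) (hN : IsNilpotent N) (v : V) (d : ℕ) :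
    htz N hN ((N ^ d) v) = htz N hN v - d := by
  have h1 : htz N hN ((N ^ d) v) ≤ htz N hN v - d := by
    apply htz_le
    rw [← pow_add_apply]
    exact htz_pow_zero N hN v (by omega)
  have h2 : htz N hN v ≤ htz N hN ((N ^ d) v) + d := by
    apply htz_le
    rw [pow_add_apply]
    exact htz_spec N hN ((N ^ d) v)
  omega

/-- the "height" of a vector: greatest `j ≤ m` with `v ∈ range N^j`. -/
noncomputable def hgt (N : V →ₗ[ℂ] V) (m : ℕ) (v : V) : ℕ :=
  Nat.findGreatest (fun j => v ∈ LinearMap.range (N ^ j)) m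

lemma hgt_mem (N : V →ₗ[ℂ] V) (m : ℕ) (v : V) :
    v ∈ LinearMap.range (N ^ hgt N m v) := by
  unfold hgt
  exact Nat.findGreatest_spec (P := fun j => v ∈ LinearMap.range (N ^ j)) (Nat.zero_le m)
    (⟨v, by simp⟩ : v ∈ LinearMap.range (N ^ 0))

lemma hgt_ge (N : V →ₗ[ℂ] V) (m : ℕ) {v : V} {j : ℕ} (hj : j ≤ m)
    (h : v ∈ LinearMap.range (N ^ j)) : j ≤ hgt N m v := by
  unfold hgt
  exact Nat.le_findGreatest hj h

lemma range_pow_m (N : V →ₗ[ℂ] V) {m : ℕ} (hm : N ^ m = 0) :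
    LinearMap.range (N ^ m) = ⊥ := by
  rw [hm, LinearMap.range_zero]

lemma hgt_le_bound (N : V →ₗ[ℂ] V) (m : ℕ) (v : V) : hgt N m v ≤ m := by
  unfold hgt
  exact Nat.findGreatest_le m

lemma hgt_lt (N : V →ₗ[ℂ] V) {m : ℕ} (hm : N ^ m = 0) {v : V} (hv : v ≠ 0) :
    hgt N m v < m := by
  rcases lt_or_ge (hgt N m v) m with h | h
  · exact h
  · exfalso
    have h1 : v ∈ LinearMap.range (N ^ m) :=
      range_pow_mono N h (hgt_mem N m v)
    rw [range_pow_m N hm, Submodule.mem_bot] at h1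
    exact hv h1

lemma hgt_notmem (N : V →ₗ[ℂ] V) {m : ℕ} (hm : N ^ m = 0) {v : V} (hv : v ≠ 0) :
    v ∉ LinearMap.range (N ^ (hgt N m v + 1)) := by
  intro h
  have hlt := hgt_lt N hm hv
  unfold hgt at h hlt
  exact Nat.findGreatest_is_greatest (P := fun j => v ∈ LinearMap.range (N ^ j))
    (lt_add_one _) (by omega) h

end S15

namespace S15

open LinearMap Module

open scoped Classical

variable {V : Type*} [AddCommGroup V] [Module ℂ V]

lemma cyc_eq_span_fin (N : V →ₗ[ℂ] V) (hN : IsNilpotent N) (w : V) :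
    cyc N w = span ℂ (Set.range fun i : Fin (htz N hN w) => (N ^ (i : ℕ)) w) := by
  apply le_antisymm
  · rw [cyc]
    refine span_le.2 ?_
    rintro _ ⟨n, rfl⟩
    show (N ^ n) w ∈ _
    by_cases hn : n < htz N hN w
    · exact subset_span ⟨⟨n, hn⟩, rfl⟩
    · rw [htz_pow_zero N hN w (by omega)]
      exact zero_mem _
  · refine span_le.2 ?_
    rintro _ ⟨i, rfl⟩
    exact mem_cyc_pow N w i

lemma iso_min (N : V →ₗ[ℂ] V) (hN : IsNilpotent N) (w : V)
    (c : Fin (htz N hN w) → ℂ) (d : Fin (htz N hN w))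
    (h0 : ∀ i, i < d → c i = 0) :
    (N ^ (htz N hN w - 1 - (d : ℕ))) (∑ i, c i • (N ^ (i : ℕ)) w)
      = c d • (N ^ (htz N hN w - 1)) w := by
  rw [map_sum]
  rw [Finset.sum_eq_single d]
  · rw [map_smul, ← pow_add_apply]
    have hd : (d : ℕ) < htz N hN w := d.isLt
    have he : htz N hN w - 1 - (d : ℕ) + (d : ℕ) = htz N hN w - 1 := by omega
    rw [he]
  · intro i _ hi
    rcases lt_or_gt_of_ne hi with hlt | hgt'
    · rw [h0 i hlt, zero_smul, map_zero]
    · rw [map_smul, ← pow_add_apply]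
      have hd : (d : ℕ) < htz N hN w := d.isLt
      have hi' : (d : ℕ) < (i : ℕ) := hgt'
      rw [htz_pow_zero N hN w (by omega), smul_zero]
  · intro h
    exact absurd (Finset.mem_univ d) h

lemma indep_cyc (N : V →ₗ[ℂ] V) (hN : IsNilpotent N) (w : V) :
    LinearIndependent ℂ (fun i : Fin (htz N hN w) => (N ^ (i : ℕ)) w) := by
  rw [Fintype.linearIndependent_iff]
  intro c hc i
  by_contra hci
  set D := Finset.univ.filter (fun i : Fin (htz N hN w) => c i ≠ 0) with hD
  have hne : D.Nonempty := ⟨i, by simp [hD, hci]⟩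
  set d := D.min' hne with hdd
  have h0 : ∀ i', i' < d → c i' = 0 := by
    intro i' hi'
    by_contra h
    have : i' ∈ D := by simp [hD, h]
    exact absurd (D.min'_le i' this) (not_le.2 hi')
  have hiso := iso_min N hN w c d h0
  rw [hc, map_zero] at hiso
  have hd0 : c d ≠ 0 := by
    have h := D.min'_mem hne
    simp only [hD, Finset.mem_filter, Finset.mem_univ, true_and] at h
    exact h
  have hw1 : (N ^ (htz N hN w - 1)) w ≠ 0 := by
    apply htz_min
    have := d.isLt
    omega
  rcases smul_eq_zero.mp hiso.symm with h | h
  · exact hd0 h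
  · exact hw1 h

lemma finrank_cyc [FiniteDimensional ℂ V] (N : V →ₗ[ℂ] V) (hN : IsNilpotent N) (w : V) :
    Module.finrank ℂ (cyc N w) = htz N hN w := by
  rw [cyc_eq_span_fin N hN w, finrank_span_eq_card (indep_cyc N hN w), Fintype.card_fin]

lemma chain' (N : V →ₗ[ℂ] V) (hN : IsNilpotent N) {w v : V} (j : ℕ)
    (hv : v ∈ cyc N w) (hj : htz N hN v + j ≤ htz N hN w) :
    v ∈ LinearMap.range (N ^ j) := by
  rw [cyc_eq_span_fin N hN w, mem_span_range_iff_exists_fun] at hv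
  obtain ⟨c, hc⟩ := hv
  have hc0 : ∀ i : Fin (htz N hN w), (i : ℕ) < j → c i = 0 := by
    by_contra hcontra
    push_neg at hcontra
    obtain ⟨i0, hi0j, hi0⟩ := hcontra
    set D := Finset.univ.filter (fun i : Fin (htz N hN w) => (i : ℕ) < j ∧ c i ≠ 0) with hD
    have hne : D.Nonempty := ⟨i0, by simp [hD, hi0j, hi0]⟩
    set d := D.min' hne with hdd
    have hdD : (d : ℕ) < j ∧ c d ≠ 0 := by
      have h := D.min'_mem hne
      simp only [hD, Finset.mem_filter, Finset.mem_univ, true_and] at h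
      exact h
    have h0 : ∀ i', i' < d → c i' = 0 := by
      intro i' hi'
      by_contra h
      have hiD : i' ∈ D := by
        rw [hD, Finset.mem_filter]
        refine ⟨Finset.mem_univ _, ?_, h⟩
        have : (i' : ℕ) < (d : ℕ) := hi'
        omega
      exact absurd (D.min'_le _ hiD) (not_le.2 hi')
    have hiso := iso_min N hN w c d h0
    rw [hc] at hiso
    have hdj : (d : ℕ) < j := hdD.1
    have hdw : (d : ℕ) < htz N hN w := d.isLt
    have hvz : (N ^ (htz N hN w - 1 - (d : ℕ))) v = 0 :=
      htz_pow_zero N hN v (by omega)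
    rw [hvz] at hiso
    have hw1 : (N ^ (htz N hN w - 1)) w ≠ 0 := by
      apply htz_min
      omega
    rcases smul_eq_zero.mp hiso.symm with h | h
    · exact hdD.2 h
    · exact hw1 h
  refine ⟨∑ i : Fin (htz N hN w), c i • (N ^ ((i : ℕ) - j)) w, ?_⟩
  rw [map_sum, ← hc]
  apply Finset.sum_congr rfl
  intro i _
  by_cases hij : (i : ℕ) < j
  · rw [hc0 i hij, zero_smul, zero_smul, map_zero]
  · rw [map_smul, ← pow_add_apply]
    have : j + ((i : ℕ) - j) = (i : ℕ) := by omega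
    rw [this]

lemma cyc_zero (N : V →ₗ[ℂ] V) : cyc N (0 : V) = ⊥ := by
  rw [cyc]
  have : (Set.range fun n : ℕ => (N ^ n) (0 : V)) = {0} := by
    ext u
    simp
  rw [this, Submodule.span_singleton_eq_bot.2 rfl]

lemma cyc_top (N : V →ₗ[ℂ] V) (hN : IsNilpotent N) {w v : V}
    (hv : v ∈ cyc N w) (hnv : v ∉ cyc N (N w)) : cyc N v = cyc N w := by
  by_cases hw0 : w = 0
  · exfalso
    subst hw0
    rw [map_zero] at hnv
    exact hnv hv
  refine le_antisymm (cyc_le N (inv_cyc N w) hv) ?_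
  rw [cyc_eq_span_fin N hN w, mem_span_range_iff_exists_fun] at hv
  obtain ⟨c, hc⟩ := hv
  have hw1 : 1 ≤ htz N hN w := htz_pos N hN hw0
  set i0 : Fin (htz N hN w) := ⟨0, by omega⟩ with hi0
  have hc00 : c i0 ≠ 0 := by
    intro h0
    apply hnv
    rw [← hc]
    apply Submodule.sum_mem
    intro i _
    by_cases hi : i = i0
    · rw [hi, h0, zero_smul]
      exact zero_mem _
    · apply Submodule.smul_mem
      have hi1 : 1 ≤ (i : ℕ) := by
        rcases Nat.eq_zero_or_pos (i : ℕ) with h | h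
        · exact absurd (Fin.ext h : i = i0) hi
        · omega
      have heq : (N ^ (i : ℕ)) w = (N ^ ((i : ℕ) - 1)) (N w) := by
        have h1 : (i : ℕ) = ((i : ℕ) - 1) + 1 := by omega
        rw [h1, pow_add_apply, pow_one]
        have h2 : (i:ℕ) - 1 + 1 - 1 = (i:ℕ) - 1 := by omega
        rw [h2]
      rw [heq]
      exact mem_cyc_pow N (N w) _
  have key : ∀ n q : ℕ, htz N hN w - q ≤ n → (N ^ q) w ∈ cyc N v := by
    intro n
    induction n with
    | zero =>
      intro q hq
      rw [htz_pow_zero N hN w (by omega)]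
      exact zero_mem _
    | succ n ih =>
      intro q hq
      by_cases hqw : htz N hN w ≤ q
      · rw [htz_pow_zero N hN w hqw]
        exact zero_mem _
      · have hqv : (N ^ q) v ∈ cyc N v := mem_cyc_pow N v q
        rw [← hc, map_sum] at hqv
        have hsplit : ∑ i : Fin (htz N hN w), (N ^ q) (c i • (N ^ (i : ℕ)) w)
            = (N ^ q) (c i0 • (N ^ (i0 : ℕ)) w)
              + ∑ i ∈ Finset.univ.erase i0, (N ^ q) (c i • (N ^ (i : ℕ)) w) :=
          (Finset.add_sum_erase _ _ (Finset.mem_univ i0)).symm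
        rw [hsplit] at hqv
        have hS : ∑ i ∈ Finset.univ.erase i0, (N ^ q) (c i • (N ^ (i : ℕ)) w) ∈ cyc N v := by
          apply Submodule.sum_mem
          intro i hi
          rw [map_smul, ← pow_add_apply]
          apply Submodule.smul_mem
          have hi1 : 1 ≤ (i : ℕ) := by
            rcases Finset.mem_erase.mp hi with ⟨hne', _⟩
            rcases Nat.eq_zero_or_pos (i : ℕ) with h | h
            · exact absurd (Fin.ext h : i = i0) hne'
            · omega
          exact ih (q + (i : ℕ)) (by omega)
        have hterm : (N ^ q) (c i0 • (N ^ (i0 : ℕ)) w) ∈ cyc N v := by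
          have h1 : (N ^ q) (c i0 • (N ^ (i0 : ℕ)) w)
              = (N ^ q) v - ∑ i ∈ Finset.univ.erase i0, (N ^ q) (c i • (N ^ (i : ℕ)) w) := by
            rw [← hc, map_sum, hsplit]
            abel
          rw [h1]
          exact Submodule.sub_mem _ (mem_cyc_pow N v q) hS
        have h2 : (N ^ q) (c i0 • (N ^ (i0 : ℕ)) w) = c i0 • (N ^ q) w := by
          have : (i0 : ℕ) = 0 := rfl
          rw [this, map_smul]
          simp
        rw [h2] at hterm
        exact (Submodule.smul_mem_iff _ hc00).mp hterm
  have hwv : w ∈ cyc N v := by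
    have := key (htz N hN w) 0 (by omega)
    simpa using this
  exact cyc_le N (inv_cyc N v) hwv

end S15

namespace S15

open LinearMap Module

open scoped Classical

variable {V : Type*} [AddCommGroup V] [Module ℂ V]

/-- Kaplansky-style extension lemma: if the height data of `z` dominates that of `x`,
then some endomorphism commuting with `N` maps `x` to `z`. -/
lemma lemA (N : V →ₗ[ℂ] V) (hN : IsNilpotent N) (x : V) :
    ∀ (f : ℕ) (z : V), htz N hN z ≤ f →
      (∀ i j : ℕ, (N ^ i) x ∈ LinearMap.range (N ^ j) →
        (N ^ i) z ∈ LinearMap.range (N ^ j)) →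
      ∃ C : V →ₗ[ℂ] V, C ∘ₗ N = N ∘ₗ C ∧ C x = z := by
  obtain ⟨m, hm⟩ := id hN
  intro f
  induction f with
  | zero =>
    intro z hz _
    have hz0 : z = 0 := by
      have := htz_pow_zero N hN z hz
      simpa using this
    exact ⟨0, by simp, by simp [hz0]⟩
  | succ f ih =>
    intro z hzf hD
    by_cases hzf' : htz N hN z ≤ f
    · exact ih z hzf' hD
    have hfz : htz N hN z = f + 1 := by omega
    set e := htz N hN x with he
    have hxe : (N ^ e) x = 0 := htz_spec N hN x
    have hez : f + 1 ≤ e := by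
      have h0 : (N ^ e) x ∈ LinearMap.range (N ^ m) := by
        rw [hxe]; exact zero_mem _
      have h1 := hD e m h0
      rw [range_pow_m N hm, Submodule.mem_bot] at h1
      have := htz_le N hN z h1
      omega
    set k := f with hk
    have he_le_m : e ≤ m := htz_le N hN x (by rw [hm]; simp)
    set H : ℕ → ℕ := fun i => hgt N m ((N ^ i) x) with hH
    have hfold : ∀ i : ℕ, hgt N m ((N ^ i) x) = H i := fun _ => rfl
    have hx_ne : ∀ i, i < e → (N ^ i) x ≠ 0 := fun i hi => htz_min N hN x (by omega)
    have hHi_lt : ∀ i, i < e → H i < m := fun i hi => hgt_lt N hm (hx_ne i hi)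
    have hstep : ∀ i, i + 1 < e → H i + 1 ≤ H (i + 1) := by
      intro i hi
      obtain ⟨y, hy⟩ := hgt_mem N m ((N ^ i) x)
      apply hgt_ge N m (by have := hHi_lt i (by omega); omega)
      exact ⟨y, by rw [pow_succ_apply, hy, ← pow_succ_apply]⟩
    have hmono : ∀ d i, i + d < e → H i + d ≤ H (i + d) := by
      intro d
      induction d with
      | zero => intro i _; simp
      | succ d ihd =>
        intro i hi
        have h1 := ihd i (by omega)
        have h2 := hstep (i + d) (by omega)
        have h3 : i + (d + 1) = (i + d) + 1 := by omega
        rw [h3]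
        omega
    have hHge : ∀ i, i ≤ m → i ≤ H i := fun i him =>
      hgt_ge N m him ⟨x, rfl⟩
    have hPex : ∃ g, k ≤ g ∧ g + 1 ≤ e ∧ (g + 1 = e ∨ H g + 2 ≤ H (g + 1)) :=
      ⟨e - 1, by omega, by omega, Or.inl (by omega)⟩
    set g := Nat.find hPex with hg
    have hPg := Nat.find_spec hPex
    rw [← hg] at hPg
    obtain ⟨hkg, hge, hgap⟩ := hPg
    have htight : ∀ d, d ≤ g - k → H (g - d) + d = H g := by
      intro d
      induction d with
      | zero => intro _; simp
      | succ d ihd =>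
        intro hd
        have hlt : g - (d + 1) < Nat.find hPex := by omega
        have hnP := Nat.find_min hPex hlt
        have hA : k ≤ g - (d + 1) := by omega
        have hB : (g - (d + 1)) + 1 ≤ e := by omega
        have hnCD : ¬((g - (d + 1)) + 1 = e ∨ H (g - (d + 1)) + 2 ≤ H (g - (d + 1) + 1)) := by
          intro hCD
          exact hnP ⟨hA, hB, hCD⟩
        push_neg at hnCD
        obtain ⟨hC, hD2⟩ := hnCD
        have hstep' := hstep (g - (d + 1)) (by omega)
        have hEq : H ((g - (d + 1)) + 1) = H (g - (d + 1)) + 1 := by omega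
        have ih' := ihd (by omega)
        have h4 : g - (d + 1) + 1 = g - d := by omega
        rw [h4] at hEq
        omega
    have hHk : H k + (g - k) = H g := by
      have h1 := htight (g - k) le_rfl
      have h2 : g - (g - k) = k := by omega
      rw [h2] at h1
      exact h1
    have hHgg : g ≤ H g := hHge g (by omega)
    set c := H g - g with hc
    have hcg : c + g = H g := by omega
    have hHk' : H k = c + k := by omega
    set s := c + g + 1 with hs
    have hzk : (N ^ k) z ∈ LinearMap.range (N ^ (c + k)) := by
      apply hD
      rw [← hHk']
      exact hgt_mem N m _
    obtain ⟨t, ht⟩ := hzk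
    have hNst : (N ^ s) t = 0 := by
      have h1 : s = (g + 1 - k) + (c + k) := by omega
      rw [h1, pow_add_apply, ht, ← pow_add_apply]
      have h2 : g + 1 - k + k = g + 1 := by omega
      rw [h2]
      exact htz_pow_zero N hN z (by omega)
    set U := span ℂ (Set.range fun i : Fin g => (N ^ (i : ℕ)) x)
      ⊔ LinearMap.range (N ^ s) with hU
    have hgnotinU : (N ^ g) x ∉ U := by
      intro hmem
      rw [hU, Submodule.mem_sup] at hmem
      obtain ⟨u, hu, r, hr, hur⟩ := hmem
      rw [mem_span_range_iff_exists_fun] at hu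
      obtain ⟨cf, hcf⟩ := hu
      by_cases hall : ∀ i, cf i = 0
      · have hu0 : u = 0 := by
          rw [← hcf]
          apply Finset.sum_eq_zero
          intro i _
          rw [hall i, zero_smul]
        apply hgt_notmem N hm (hx_ne g (by omega))
        show (N ^ g) x ∈ LinearMap.range (N ^ (H g + 1))
        have hs' : H g + 1 = s := by omega
        rw [hs']
        have : (N ^ g) x = r := by rw [← hur, hu0, zero_add]
        rw [this]
        exact hr
      · push_neg at hall
        obtain ⟨i0, hi0⟩ := hall
        set D := Finset.univ.filter (fun i : Fin g => cf i ≠ 0) with hDD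
        have hne : D.Nonempty := ⟨i0, by simp [hDD, hi0]⟩
        set d := D.min' hne with hd
        have hdD : cf d ≠ 0 := by
          have h := D.min'_mem hne
          simp only [hDD, Finset.mem_filter, Finset.mem_univ, true_and] at h
          exact h
        have hdlt : (d : ℕ) < g := d.isLt
        have hsum : cf d • (N ^ (d : ℕ)) x
            = (N ^ g) x - r - ∑ i ∈ Finset.univ.erase d, cf i • (N ^ (i : ℕ)) x := by
          rw [← hur, ← hcf, ← Finset.add_sum_erase _ _ (Finset.mem_univ d)]
          abel
        have hmem' : cf d • (N ^ (d : ℕ)) x ∈ LinearMap.range (N ^ (H (d : ℕ) + 1)) := by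
          rw [hsum]
          apply sub_mem
          apply sub_mem
          · apply range_pow_mono N ?_ (hgt_mem N m _)
            rw [hfold]
            have := hmono (g - (d : ℕ)) (d : ℕ) (by omega)
            rw [show (d : ℕ) + (g - (d : ℕ)) = g by omega] at this
            omega
          · apply range_pow_mono N ?_ hr
            have := hmono (g - (d : ℕ)) (d : ℕ) (by omega)
            rw [show (d : ℕ) + (g - (d : ℕ)) = g by omega] at this
            omega
          · apply Submodule.sum_mem
            intro i hi
            by_cases hci : cf i = 0
            · rw [hci, zero_smul]
              exact zero_mem _
            · have hiD : i ∈ D := by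
                rw [hDD, Finset.mem_filter]
                exact ⟨Finset.mem_univ _, hci⟩
              have hdi : d ≤ i := D.min'_le i hiD
              have hdi' : (d : ℕ) < (i : ℕ) := by
                rcases Finset.mem_erase.mp hi with ⟨hne', _⟩
                have h5 : d < i := lt_of_le_of_ne hdi (Ne.symm hne')
                exact h5
              apply Submodule.smul_mem
              apply range_pow_mono N ?_ (hgt_mem N m _)
              rw [hfold]
              have := hmono ((i : ℕ) - (d : ℕ)) (d : ℕ) (by omega)
              rw [show (d : ℕ) + ((i : ℕ) - (d : ℕ)) = (i : ℕ) by omega] at this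
              omega
        have hfinal : (N ^ (d : ℕ)) x ∈ LinearMap.range (N ^ (H (d : ℕ) + 1)) := by
          have h9 := Submodule.smul_mem _ (cf d)⁻¹ hmem'
          rwa [inv_smul_smul₀ hdD] at h9
        exact hgt_notmem N hm (hx_ne (d : ℕ) (by omega)) hfinal
    obtain ⟨lam, hlam1, hlamU⟩ :
        ∃ lam : V →ₗ[ℂ] ℂ, lam ((N ^ g) x) = 1 ∧ ∀ u ∈ U, lam u = 0 := by
      have hq : U.mkQ ((N ^ g) x) ≠ 0 := by
        rw [Submodule.mkQ_apply, Ne, Submodule.Quotient.mk_eq_zero]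
        exact hgnotinU
      obtain ⟨φ, hφ⟩ : ∃ φ : Module.Dual ℂ (V ⧸ U), φ (U.mkQ ((N ^ g) x)) ≠ 0 := by
        by_contra hφ
        push_neg at hφ
        exact hq ((Module.forall_dual_apply_eq_zero_iff ℂ _).mp hφ)
      refine ⟨(φ (U.mkQ ((N ^ g) x)))⁻¹ • (φ ∘ₗ U.mkQ), ?_, ?_⟩
      · simp only [LinearMap.smul_apply, LinearMap.comp_apply, smul_eq_mul]
        exact inv_mul_cancel₀ hφ
      · intro u hu
        have h0 : U.mkQ u = 0 := by
          rw [Submodule.mkQ_apply, Submodule.Quotient.mk_eq_zero]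
          exact hu
        simp only [LinearMap.smul_apply, LinearMap.comp_apply, h0, map_zero, smul_eq_mul,
          mul_zero]
    have hlam_ne : ∀ i : ℕ, i ≠ g → lam ((N ^ i) x) = 0 := by
      intro i hig
      rcases lt_or_gt_of_ne hig with hlt | hgt'
      · apply hlamU
        apply Submodule.mem_sup_left
        exact subset_span ⟨⟨i, hlt⟩, rfl⟩
      · by_cases hie : i < e
        · apply hlamU
          apply Submodule.mem_sup_right
          apply range_pow_mono N ?_ (hgt_mem N m _)
          rw [hfold]
          rcases hgap with hcase | hcase
          · omega
          · have := hmono (i - (g + 1)) (g + 1) (by omega)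
            rw [show g + 1 + (i - (g + 1)) = i by omega] at this
            omega
        · rw [htz_pow_zero N hN x (by omega), map_zero]
    set E := lam.smulRight t with hE
    have hNsE : (N ^ s) * E = 0 := by
      ext u
      simp only [Module.End.mul_apply, hE, smulRight_apply, map_smul, hNst, smul_zero,
        LinearMap.zero_apply]
    have hENs : E * (N ^ s) = 0 := by
      ext u
      simp only [Module.End.mul_apply, hE, smulRight_apply, LinearMap.zero_apply]
      rw [hlamU _ (Submodule.mem_sup_right ⟨u, rfl⟩), zero_smul]
    set psi := ∑ l ∈ Finset.range s, N ^ l * E * N ^ (s - 1 - l) with hpsi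
    have hcomm : N * psi = psi * N := by
      have h1 : psi * N = ∑ l ∈ Finset.range s, N ^ l * E * N ^ (s - l) := by
        rw [hpsi, Finset.sum_mul]
        apply Finset.sum_congr rfl
        intro l hl
        rw [Finset.mem_range] at hl
        calc (N ^ l * E * N ^ (s - 1 - l)) * N
            = N ^ l * E * (N ^ (s - 1 - l) * N) := by rw [mul_assoc]
          _ = N ^ l * E * N ^ (s - l) := by
              rw [← pow_succ, show s - 1 - l + 1 = s - l from by omega]
      have h2 : N * psi = ∑ l ∈ Finset.range s, N ^ (l + 1) * E * N ^ (s - (l + 1)) := by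
        rw [hpsi, Finset.mul_sum]
        apply Finset.sum_congr rfl
        intro l hl
        calc N * (N ^ l * E * N ^ (s - 1 - l))
            = (N * (N ^ l * E)) * N ^ (s - 1 - l) := (mul_assoc N (N ^ l * E) _).symm
          _ = (N * N ^ l) * E * N ^ (s - 1 - l) := by rw [← mul_assoc N (N ^ l) E]
          _ = N ^ (l + 1) * E * N ^ (s - (l + 1)) := by
              rw [← pow_succ', show s - (l + 1) = s - 1 - l from by omega]
      rw [h1, h2]
      have h3 := Finset.sum_range_sub (fun l => N ^ l * E * N ^ (s - l)) s
      rw [Finset.sum_sub_distrib] at h3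
      have h4 : N ^ s * E * N ^ (s - s) = 0 := by
        rw [Nat.sub_self, pow_zero, mul_one, hNsE]
      have h5 : N ^ 0 * E * N ^ (s - 0) = 0 := by
        rw [pow_zero, one_mul, Nat.sub_zero, hENs]
      rw [h4, h5, sub_zero] at h3
      rw [sub_eq_zero] at h3
      exact h3
    have hpsix : psi x = (N ^ c) t := by
      rw [hpsi, LinearMap.sum_apply]
      rw [Finset.sum_eq_single c]
      · simp only [Module.End.mul_apply, hE, smulRight_apply]
        have hsc : s - 1 - c = g := by omega
        rw [hsc, hlam1, one_smul]
      · intro l hl hlc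
        rw [Finset.mem_range] at hl
        simp only [Module.End.mul_apply, hE, smulRight_apply]
        rw [hlam_ne (s - 1 - l) (by omega), zero_smul, map_zero]
      · intro hcs
        exfalso
        apply hcs
        rw [Finset.mem_range]
        omega
    set z' := z - (N ^ c) t with hz'
    have hkz' : (N ^ k) z' = 0 := by
      rw [hz', map_sub, ← pow_add_apply]
      rw [show k + c = c + k by omega, ht, sub_self]
    have hz'f : htz N hN z' ≤ f := htz_le N hN z' hkz'
    have hD' : ∀ i j : ℕ, (N ^ i) x ∈ LinearMap.range (N ^ j) →
        (N ^ i) z' ∈ LinearMap.range (N ^ j) := by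
      intro i j hij
      by_cases hik : k ≤ i
      · have h0 : (N ^ i) z' = 0 := by
          rw [show i = (i - k) + k by omega, pow_add_apply, hkz', map_zero]
        rw [h0]
        exact zero_mem _
      · push_neg at hik
        by_cases hjc : j ≤ c + i
        · rw [hz', map_sub]
          apply sub_mem
          · exact hD i j hij
          · apply range_pow_mono N (show j ≤ i + c by omega)
            exact ⟨t, pow_add_apply N i c t⟩
        · exfalso
          push_neg at hjc
          have hHi : H i ≤ c + i := by
            have := hmono (k - i) i (by omega)
            rw [show i + (k - i) = k by omega] at this
            omega
          by_cases hjm : j ≤ m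
          · have := hgt_ge N m hjm hij
            rw [hfold] at this
            omega
          · have h2 : (N ^ i) x ∈ LinearMap.range (N ^ m) :=
              range_pow_mono N (by omega) hij
            rw [range_pow_m N hm, Submodule.mem_bot] at h2
            exact hx_ne i (by omega) h2
    obtain ⟨C', hC'comm, hC'x⟩ := ih z' hz'f hD'
    refine ⟨psi + C', ?_, ?_⟩
    · rw [LinearMap.add_comp, LinearMap.comp_add, hC'comm]
      congr 1
      rw [← Module.End.mul_eq_comp, ← Module.End.mul_eq_comp, hcomm]
    · rw [LinearMap.add_apply, hpsix, hC'x, hz']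
      abel

end S15

namespace S15

open LinearMap Module

open scoped Classical

variable {V : Type*} [AddCommGroup V] [Module ℂ V]

lemma finrank_map_eq [FiniteDimensional ℂ V] {T : V →ₗ[ℂ] V} (hT : Function.Injective T)
    (p : Submodule ℂ V) : Module.finrank ℂ (p.map T) = Module.finrank ℂ p :=
  (Submodule.equivMapOfInjective T hT p).finrank_eq.symm

/-- From the hypothesis on cyclic subspaces, `T` maps each cyclic subspace onto the
cyclic subspace of the image. -/
lemma eqTcyc [FiniteDimensional ℂ V] {N T : V →ₗ[ℂ] V} (hN : IsNilpotent N)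
    (hT : Function.Bijective T)
    (H : ∀ x : V, ∃ C : V →ₗ[ℂ] V, C ∘ₗ N = N ∘ₗ C ∧ (cyc N x).map T = (cyc N x).map C)
    (x : V) : (cyc N x).map T = cyc N (T x) := by
  by_cases hx : x = 0
  · subst hx
    rw [cyc_zero, Submodule.map_bot, map_zero, cyc_zero]
  obtain ⟨C, hC, hCx⟩ := H x
  rw [map_cyc_comm hC] at hCx
  obtain ⟨C', hC', hC'x⟩ := H (N x)
  rw [map_cyc_comm hC'] at hC'x
  have hTx_mem : T x ∈ cyc N (C x) := by
    rw [← hCx]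
    exact Submodule.mem_map_of_mem (mem_cyc_self N x)
  have hx1 : 1 ≤ htz N hN x := htz_pos N hN hx
  have hrkCx : htz N hN (C x) = htz N hN x := by
    have h1 := finrank_cyc N hN (C x)
    have h2 := finrank_cyc N hN x
    rw [← hCx, finrank_map_eq hT.injective] at h1
    omega
  have hrkC'Nx : htz N hN (C' (N x)) = htz N hN x - 1 := by
    have h1 := finrank_cyc N hN (C' (N x))
    have h2 := finrank_cyc N hN (N x)
    rw [← hC'x, finrank_map_eq hT.injective] at h1
    have h3 : htz N hN (N x) = htz N hN x - 1 := by
      have := htz_pow_apply N hN x 1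
      simpa using this
    omega
  by_cases hTx : T x ∈ cyc N (N (C x))
  · exfalso
    -- cyc (C' (N x)) = cyc (N (C x)), and T x ∈ it leads to x ∈ cyc (N x)
    have hsub : cyc N (C' (N x)) ≤ cyc N (C x) := by
      rw [← hC'x, ← hCx]
      exact Submodule.map_mono (cyc_le N (inv_cyc N x) (by
        have : (N ^ 1) x ∈ cyc N x := mem_cyc_pow N x 1
        simpa using this))
    have hC'Nx_mem : C' (N x) ∈ cyc N (C x) := hsub (mem_cyc_self N _)
    have hNCx : htz N hN (N (C x)) = htz N hN x - 1 := by
      have := htz_pow_apply N hN (C x) 1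
      simp only [pow_one] at this
      omega
    have hcyceq : cyc N (C' (N x)) = cyc N (N (C x)) := by
      by_cases hmem2 : C' (N x) ∈ cyc N (N (C x))
      · apply Submodule.eq_of_le_of_finrank_le
        · exact cyc_le N (inv_cyc N _) hmem2
        · rw [finrank_cyc N hN, finrank_cyc N hN, hrkC'Nx, hNCx]
      · exfalso
        have := cyc_top N hN hC'Nx_mem hmem2
        have h1 := finrank_cyc N hN (C' (N x))
        have h2 := finrank_cyc N hN (C x)
        rw [this] at h1
        omega
    have hTx2 : T x ∈ (cyc N (N x)).map T := by
      rw [hC'x, hcyceq]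
      exact hTx
    obtain ⟨u, hu, huT⟩ := hTx2
    have hxu : x = u := (hT.injective huT.symm)
    have hxNx : x ∈ cyc N (N x) := hxu ▸ hu
    have hle : cyc N x ≤ cyc N (N x) := cyc_le N (inv_cyc N _) hxNx
    have h1 := finrank_cyc N hN x
    have h2 := finrank_cyc N hN (N x)
    have h3 : htz N hN (N x) = htz N hN x - 1 := by
      have := htz_pow_apply N hN x 1
      simpa using this
    have h4 : Module.finrank ℂ (cyc N x) ≤ Module.finrank ℂ (cyc N (N x)) :=
      Submodule.finrank_mono hle
    omega
  · have := cyc_top N hN hTx_mem hTx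
    rw [hCx, ← this]

end S15

open S15 in
theorem stmt15 {V : Type*} [AddCommGroup V] [Module ℂ V] [FiniteDimensional ℂ V]
    (N T : V →ₗ[ℂ] V) (hN : IsNilpotent N) (hT : Function.Bijective T) :
    Col N T ↔
      ∀ x : V, ∃ C : V →ₗ[ℂ] V, C ∘ₗ N = N ∘ₗ C ∧
        (cyc N x).map T = (cyc N x).map C := by
  constructor
  · rintro ⟨hbij, hiff⟩ x
    -- Step 1: T maps cyclic subspaces to cyclic subspaces
    have S1 : ∀ v : V, (cyc N v).map T = cyc N (T v) := by
      intro v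
      refine le_antisymm ?_ ?_
      · have hinv : InvSub N (Submodule.comap T (cyc N (T v))) := by
          refine (hiff _).mpr ?_
          rw [Submodule.map_comap_eq_of_surjective hT.surjective]
          exact inv_cyc N (T v)
        have h1 : cyc N v ≤ Submodule.comap T (cyc N (T v)) := by
          apply cyc_le N hinv
          exact Submodule.mem_comap.mpr (mem_cyc_self N (T v))
        calc (cyc N v).map T ≤ (Submodule.comap T (cyc N (T v))).map T :=
              Submodule.map_mono h1
          _ = cyc N (T v) := Submodule.map_comap_eq_of_surjective hT.surjective _
      · exact cyc_le N ((hiff _).mp (inv_cyc N v))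
          ⟨v, mem_cyc_self N v, rfl⟩
    -- Step 2: T preserves the exponent of vectors
    have S2 : ∀ v : V, htz N hN (T v) = htz N hN v := by
      intro v
      have h1 := finrank_cyc N hN (T v)
      have h2 := finrank_cyc N hN v
      have h3 : Module.finrank ℂ (cyc N (T v)) = Module.finrank ℂ (cyc N v) := by
        rw [← S1 v]
        exact finrank_map_eq hT.injective _
      omega
    -- Step 3: height domination for the pair (x, T x)
    have S3 : ∀ i j : ℕ, (N ^ i) x ∈ LinearMap.range (N ^ j) →
        (N ^ i) (T x) ∈ LinearMap.range (N ^ j) := by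
      intro i j hij
      rcases le_or_gt j i with hji | hij'
      · exact ⟨(N ^ (i - j)) (T x), by
          rw [← pow_add_apply, show j + (i - j) = i by omega]⟩
      · obtain ⟨y, hy⟩ := hij
        set d := j - i with hd
        have hdj : i + d = j := by omega
        by_cases hu0 : (N ^ d) y = 0
        · have hxi : (N ^ i) x = 0 := by
            rw [← hy, ← hdj, pow_add_apply, hu0, map_zero]
          have h4 : htz N hN (T x) ≤ i := by
            rw [S2 x]
            exact htz_le N hN x hxi
          rw [htz_pow_zero N hN (T x) h4]
          exact zero_mem _
        · have hdy : d ≤ htz N hN y := by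
            by_contra hh
            push_neg at hh
            exact hu0 (htz_pow_zero N hN y (by omega))
          have hTu_mem : T ((N ^ d) y) ∈ cyc N (T y) := by
            rw [← S1 y]
            exact Submodule.mem_map_of_mem (mem_cyc_pow N y d)
          have hTu : T ((N ^ d) y) ∈ LinearMap.range (N ^ d) := by
            apply chain' N hN d hTu_mem
            rw [S2, htz_pow_apply, S2]
            omega
          obtain ⟨y', hy'⟩ := hTu
          have hker : (N ^ i) (T x - T ((N ^ d) y)) = 0 := by
            have h1 : (N ^ i) (x - (N ^ d) y) = 0 := by
              rw [map_sub, ← pow_add_apply, hdj, hy, sub_self]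
            have h2 : htz N hN (T (x - (N ^ d) y)) ≤ i := by
              rw [S2]
              exact htz_le N hN _ h1
            rw [← map_sub]
            exact htz_pow_zero N hN _ h2
          have hsplit : (N ^ i) (T x)
              = (N ^ i) (T ((N ^ d) y)) + (N ^ i) (T x - T ((N ^ d) y)) := by
            rw [← map_add]
            congr 1
            abel
          rw [hsplit, hker, add_zero, ← hy', ← pow_add_apply, hdj]
          exact ⟨y', rfl⟩
    obtain ⟨C, hCcomm, hCx⟩ := lemA N hN x (htz N hN (T x)) (T x) le_rfl S3
    refine ⟨C, hCcomm, ?_⟩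
    rw [map_cyc_comm hCcomm, hCx, S1 x]
  · intro H
    refine ⟨hT, fun M => ⟨?_, ?_⟩⟩
    · intro hM
      rintro _ ⟨_, ⟨v, hv, rfl⟩, rfl⟩
      have h1 : N (T v) ∈ cyc N (T v) :=
        inv_cyc N (T v) (Submodule.mem_map_of_mem (mem_cyc_self N (T v)))
      rw [← eqTcyc hN hT H v] at h1
      obtain ⟨u, hu, huv⟩ := h1
      exact ⟨u, cyc_le N hM hv hu, huv⟩
    · intro hTM
      rintro _ ⟨v, hv, rfl⟩
      have h1 : cyc N (T v) ≤ M.map T := cyc_le N hTM ⟨v, hv, rfl⟩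
      rw [← eqTcyc hN hT H v] at h1
      have h2 : cyc N v ≤ M := by
        intro u hu
        obtain ⟨u', hu', huu⟩ := h1 (Submodule.mem_map_of_mem hu)
        rwa [← hT.injective huu]
      apply h2
      have : (N ^ 1) v ∈ cyc N v := mem_cyc_pow N v 1
      simpa using this
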